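/- Let a, Λ > 0 and r_e, r_c > 0 with r_e ≠ r_c. With ξ = (Λa²/3)/(1+Λa²/3), g(ξ) = (√((1−ξ)/ξ)·arctan(√(ξ/(1−ξ))) − 1)/ξ, and trace quantities γ₀(r₀) = η²[(1−β²)+(ξ−β²)g(ξ)], γ₁(r₀) = η²(1−ξ) (η² = r₀²+a², β² = a²/η²) for r₀ ∈ {r_e, r_c}, writing γ₀ᵉ, γ₁ᵉ, γ₀ᶜ, γ₁ᶜ for the traces at r_e and r_c respectively, the angular momentum parameter satisfies a² = (ξ/(1−ξ))·(γ₁ᶜγ₀ᵉ − γ₁ᵉγ₀ᶜ)/(γ₀ᵉ − γ₁ᵉ + γ₁ᶜ − γ₀ᶜ). -/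

import Mathlib

/-- The function `g(ξ) = (√((1−ξ)/ξ)·arctan(√(ξ/(1−ξ))) − 1)/ξ`. -/
noncomputable def gfun (ξ : ℝ) : ℝ :=
  (Real.sqrt ((1 - ξ) / ξ) * Real.arctan (Real.sqrt (ξ / (1 - ξ))) - 1) / ξ

lemma arctan_gt (t : ℝ) (ht : 0 < t) : t / (1 + t ^ 2) < Real.arctan t := by
  set f : ℝ → ℝ := fun x => Real.arctan x - x / (1 + x ^ 2) with hf
  have hderiv : ∀ x : ℝ, HasDerivAt f
      (1 / (1 + x ^ 2) - (1 * (1 + x ^ 2) - x * (2 * x ^ 1)) / (1 + x ^ 2) ^ 2) x := by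
    intro x
    have hd : (0:ℝ) < 1 + x ^ 2 := by positivity
    exact (Real.hasDerivAt_arctan x).sub
      ((hasDerivAt_id x).div (((hasDerivAt_pow 2 x).const_add 1)) (ne_of_gt hd))
  have hmono : StrictMonoOn f (Set.Ici 0) := by
    apply strictMonoOn_of_deriv_pos (convex_Ici 0)
    · exact Continuous.continuousOn (by
        apply Real.continuous_arctan.sub
        exact continuous_id.div (by continuity) (fun x => by positivity))
    · intro x hx
      rw [interior_Ici] at hx
      rw [(hderiv x).deriv]
      have hd : (0:ℝ) < 1 + x ^ 2 := by positivity
      have h2 : 1 / (1 + x ^ 2) - (1 * (1 + x ^ 2) - x * (2 * x ^ 1)) / (1 + x ^ 2) ^ 2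
          = 2 * x ^ 2 / (1 + x ^ 2) ^ 2 := by
        field_simp
        ring
      rw [h2]
      have hx0 : (0:ℝ) < x := hx
      positivity
  have h0 : f 0 = 0 := by simp [hf]
  have := hmono (Set.self_mem_Ici) (Set.mem_Ici.mpr ht.le) ht
  rw [h0] at this
  simpa [hf, sub_pos] using this

lemma one_add_gfun_pos (ξ : ℝ) (h0 : 0 < ξ) (h1 : ξ < 1) : 0 < 1 + gfun ξ := by
  have h1ξ : (0:ℝ) < 1 - ξ := by linarith
  set t := Real.sqrt (ξ / (1 - ξ)) with hT
  set s := Real.sqrt ((1 - ξ) / ξ) with hS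
  have ht : 0 < t := Real.sqrt_pos.mpr (by positivity)
  have hs : 0 < s := Real.sqrt_pos.mpr (by positivity)
  have ht2 : t ^ 2 = ξ / (1 - ξ) := Real.sq_sqrt (by positivity)
  have hst : s * t = 1 := by
    rw [hS, hT, ← Real.sqrt_mul (by positivity)]
    rw [show (1 - ξ) / ξ * (ξ / (1 - ξ)) = 1 by field_simp]
    exact Real.sqrt_one
  have hden : 1 + t ^ 2 = 1 / (1 - ξ) := by
    rw [ht2]; field_simp; ring
  have key : t / (1 + t ^ 2) < Real.arctan t := arctan_gt t ht
  have key2 : t * (1 - ξ) < Real.arctan t := by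
    have : t / (1 + t ^ 2) = t * (1 - ξ) := by
      rw [hden]; field_simp
    linarith [this ▸ key]
  have key3 : 1 - ξ < s * Real.arctan t := by
    have := mul_lt_mul_of_pos_left key2 hs
    calc 1 - ξ = s * (t * (1 - ξ)) := by rw [← mul_assoc, hst]; ring
    _ < s * Real.arctan t := this
  have : 1 + gfun ξ = (ξ + (s * Real.arctan t - 1)) / ξ := by
    rw [gfun, ← hS, ← hT]
    field_simp
  rw [this]
  apply div_pos (by linarith) h0

/-- Spectral formula for the angular momentum parameter:
`a² = (ξ/(1−ξ))·(γ₁ᶜγ₀ᵉ − γ₁ᵉγ₀ᶜ)/(γ₀ᵉ − γ₁ᵉ + γ₁ᶜ − γ₀ᶜ)`. -/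
theorem stmt_14 (a Λ re rc : ℝ) (ha : 0 < a) (hΛ : 0 < Λ)
    (hre : 0 < re) (hrc : 0 < rc) (hne : re ≠ rc)
    (ξ γ0e γ1e γ0c γ1c : ℝ)
    (hξ : ξ = (Λ * a ^ 2 / 3) / (1 + Λ * a ^ 2 / 3))
    (hγ0e : γ0e = (re ^ 2 + a ^ 2) *
      ((1 - a ^ 2 / (re ^ 2 + a ^ 2)) + (ξ - a ^ 2 / (re ^ 2 + a ^ 2)) * gfun ξ))
    (hγ1e : γ1e = (re ^ 2 + a ^ 2) * (1 - ξ))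
    (hγ0c : γ0c = (rc ^ 2 + a ^ 2) *
      ((1 - a ^ 2 / (rc ^ 2 + a ^ 2)) + (ξ - a ^ 2 / (rc ^ 2 + a ^ 2)) * gfun ξ))
    (hγ1c : γ1c = (rc ^ 2 + a ^ 2) * (1 - ξ)) :
    a ^ 2 = (ξ / (1 - ξ)) *
      ((γ1c * γ0e - γ1e * γ0c) / (γ0e - γ1e + γ1c - γ0c)) := by
  have hx : (0:ℝ) < Λ * a ^ 2 / 3 := by positivity
  have hξ0 : 0 < ξ := by rw [hξ]; positivity
  have hξ1 : ξ < 1 := by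
    rw [hξ]
    rw [div_lt_one (by linarith)]
    linarith
  have h1ξ : (0:ℝ) < 1 - ξ := by linarith
  set G := gfun ξ with hG
  have hGpos : 0 < 1 + G := one_add_gfun_pos ξ hξ0 hξ1
  have hηe : (0:ℝ) < re ^ 2 + a ^ 2 := by positivity
  have hηc : (0:ℝ) < rc ^ 2 + a ^ 2 := by positivity
  have hsq : re ^ 2 - rc ^ 2 ≠ 0 := by
    intro h
    apply hne
    have h2 : (re - rc) * (re + rc) = 0 := by ring_nf; linarith
    rcases mul_eq_zero.mp h2 with h3 | h3
    · linarith
    · linarith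
  have hN : γ1c * γ0e - γ1e * γ0c = (1 - ξ) * a ^ 2 * (re ^ 2 - rc ^ 2) * (1 + G) := by
    rw [hγ0e, hγ1e, hγ0c, hγ1c]
    field_simp
    ring
  have hD : γ0e - γ1e + γ1c - γ0c = ξ * (re ^ 2 - rc ^ 2) * (1 + G) := by
    rw [hγ0e, hγ1e, hγ0c, hγ1c]
    field_simp
    ring
  rw [hN, hD]
  field_simp
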